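/- Let Λ be a lattice and let h, z, f ∈ Λ satisfy ⟨h,h⟩ = 2, ⟨z,z⟩ = −2, ⟨h,z⟩ = 0 and h − z = 2f. Let U = ℤf + ℤz and U⊥ = {v ∈ Λ : ⟨v,f⟩ = 0 and ⟨v,z⟩ = 0}. Then the orthogonal complement h⊥ = {v ∈ Λ : ⟨v,h⟩ = 0} is the internal direct sum of ℤz and U⊥, and this decomposition is orthogonal: ⟨z,w⟩ = 0 for every w ∈ U⊥. -/
import Mathlib


/-- The orthogonal complement `{w ∈ Λ : ⟨w,u⟩ = 0 for all u ∈ U}` of a submodule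
`U` of a lattice `Λ` with bilinear form `B`. -/
def orthoCompl {Λ : Type*} [AddCommGroup Λ] [Module ℤ Λ]
    (B : Λ →ₗ[ℤ] Λ →ₗ[ℤ] ℤ) (U : Submodule ℤ Λ) : Submodule ℤ Λ where
  carrier := {w | ∀ u ∈ U, B w u = 0}
  add_mem' := by
    intro a b ha hb u hu
    simp [map_add, LinearMap.add_apply, ha u hu, hb u hu]
  zero_mem' := by
    intro u hu
    simp
  smul_mem' := by
    intro c x hx u hu
    simp [map_smul, LinearMap.smul_apply, hx u hu]

lemma mem_orthoCompl_iff {Λ : Type*} [AddCommGroup Λ] [Module ℤ Λ]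
    (B : Λ →ₗ[ℤ] Λ →ₗ[ℤ] ℤ) (U : Submodule ℤ Λ) (w : Λ) :
    w ∈ orthoCompl B U ↔ ∀ u ∈ U, B w u = 0 := Iff.rfl

/-- Let `Λ` be a lattice with symmetric bilinear form `B`, and let
`h, z, f ∈ Λ` satisfy `⟨h,h⟩ = 2`, `⟨z,z⟩ = −2`, `⟨h,z⟩ = 0` and `h − z = 2f`.
Let `U = ℤf + ℤz` and `U⊥` its orthogonal complement.  Then `h⊥` is the internal
direct sum of `ℤz` and `U⊥`, orthogonally: `⟨z,w⟩ = 0` for every `w ∈ U⊥`. -/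
theorem stmt9 {Λ : Type*} [AddCommGroup Λ] [Module ℤ Λ]
    [Module.Free ℤ Λ] [Module.Finite ℤ Λ]
    (B : Λ →ₗ[ℤ] Λ →ₗ[ℤ] ℤ) (hsymm : ∀ x y, B x y = B y x)
    (h z f : Λ) (hh : B h h = 2) (hz : B z z = -2) (hhz : B h z = 0)
    (hf : h - z = (2 : ℤ) • f) :
    orthoCompl B (Submodule.span ℤ ({h} : Set Λ))
        = Submodule.span ℤ ({z} : Set Λ) ⊔ orthoCompl B (Submodule.span ℤ ({f, z} : Set Λ)) ∧
    Submodule.span ℤ ({z} : Set Λ) ⊓ orthoCompl B (Submodule.span ℤ ({f, z} : Set Λ)) = ⊥ ∧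
    ∀ w ∈ orthoCompl B (Submodule.span ℤ ({f, z} : Set Λ)), B z w = 0 := by
  -- basic numeric facts
  have hfz : B f z = 1 := by
    have e : B h z - B z z = 2 * B f z := by
      have := congrArg (fun x => B x z) hf
      simpa [map_sub, map_smul] using this
    rw [hhz, hz] at e; omega
  have hzf : B z f = 1 := by rw [hsymm]; exact hfz
  -- characterizations of orthogonal complements
  have memU : ∀ w : Λ, w ∈ orthoCompl B (Submodule.span ℤ ({f, z} : Set Λ)) ↔
      B w f = 0 ∧ B w z = 0 := by
    intro w
    constructor
    · intro hw
      exact ⟨hw f (Submodule.subset_span (by simp)),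
             hw z (Submodule.subset_span (by simp))⟩
    · rintro ⟨h1, h2⟩ u hu
      rcases (Submodule.mem_span_pair).1 hu with ⟨a, b, rfl⟩
      simp [map_add, map_smul, h1, h2]
  have memH : ∀ w : Λ, w ∈ orthoCompl B (Submodule.span ℤ ({h} : Set Λ)) ↔
      B w h = 0 := by
    intro w
    constructor
    · intro hw
      exact hw h (Submodule.subset_span (by simp))
    · intro h1 u hu
      rcases (Submodule.mem_span_singleton).1 hu with ⟨a, rfl⟩
      simp [map_smul, h1]
  refine ⟨?_, ?_, ?_⟩
  · ext v
    rw [memH, Submodule.mem_sup]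
    constructor
    · intro hv
      have hvz : B v z = -2 * B v f := by
        have e : B v h - B v z = 2 * B v f := by
          have := congrArg (fun x => B v x) hf
          simpa [map_sub, map_smul] using this
        rw [hv] at e; omega
      refine ⟨(B v f) • z, ?_, v - (B v f) • z, (memU _).2 ⟨?_, ?_⟩, by abel⟩
      · rw [← Int.cast_smul_eq_zsmul ℤ]
        exact Submodule.smul_mem _ _ (Submodule.mem_span_singleton_self z)
      · simp [map_sub, map_smul, hzf]
      · simp [map_sub, map_smul, hz, hvz]; ring
    · rintro ⟨y, hy, w, hw, rfl⟩
      rcases Submodule.mem_span_singleton.1 hy with ⟨a, rfl⟩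
      rcases (memU w).1 hw with ⟨h1, h2⟩
      have hzh : B z h = 0 := by rw [hsymm]; exact hhz
      have hwh : B w h = 0 := by
        have hh' : h = (2 : ℤ) • f + z := by
          rw [← hf]; abel
        rw [hh']
        simp [h1, h2]
      simp [map_add, map_smul, hzh, hwh]
  · rw [Submodule.eq_bot_iff]
    rintro v ⟨hv1, hv2⟩
    rcases Submodule.mem_span_singleton.1 hv1 with ⟨a, rfl⟩
    have := ((memU _).1 hv2).2
    simp [map_smul, hz] at this
    rw [this]; exact @zero_smul ℤ Λ _ _ (MulActionWithZero.toSMulWithZero ℤ Λ) z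
  · intro w hw
    rw [hsymm]
    exact ((memU w).1 hw).2
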